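/- Let z₀ satisfy the Robinson constraint qualification: for all (e, ξ, w) ∈ E × ℝⁿ × W there exist z ∈ Z, v ∈ cone((−∞,0]ⁿ − H(z₀)), v' ∈ cone(K − G(z₀)) with DF(z₀)z = e, DH(z₀)z − v = ξ, DG(z₀)z − v' = w. Suppose l ∈ ℝⁿ satisfies l ≥ 0 and lᵀH(z₀) = 0 (so l ∈ N((−∞,0]ⁿ, H(z₀))), w* ∈ N(K, G(z₀)), e* ∈ E*, and lᵀDH(z₀) + DF(z₀)*e* + DG(z₀)*w* = 0 as a functional on Z. Then l = 0, e* = 0 and w* = 0. -/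
import Mathlib


theorem robinson_cq_normality
    {Z E W : Type*} [NormedAddCommGroup Z] [NormedSpace ℝ Z]
    [NormedAddCommGroup E] [NormedSpace ℝ E]
    [NormedAddCommGroup W] [NormedSpace ℝ W]
    (n : ℕ)
    (DF : Z →L[ℝ] E) (DH : Z →L[ℝ] (Fin n → ℝ)) (DG : Z →L[ℝ] W)
    (Hz0 : Fin n → ℝ) (hHz0 : ∀ i, Hz0 i ≤ 0)
    (K : Set W) (hKconv : Convex ℝ K) (hKclosed : IsClosed K)
    (Gz0 : W) (hGz0 : Gz0 ∈ K)
    (robinson : ∀ (e : E) (ξ : Fin n → ℝ) (w : W),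
      ∃ (z : Z) (v : Fin n → ℝ) (v' : W),
        (∃ (l : ℝ) (y : Fin n → ℝ), 0 < l ∧ (∀ i, y i ≤ 0) ∧ v = l • (y - Hz0)) ∧
        (∃ (l : ℝ) (y : W), 0 < l ∧ y ∈ K ∧ v' = l • (y - Gz0)) ∧
        DF z = e ∧ DH z - v = ξ ∧ DG z - v' = w)
    (l : Fin n → ℝ) (hl : ∀ i, 0 ≤ l i) (hcompl : ∑ i, l i * Hz0 i = 0)
    (estar : E →L[ℝ] ℝ) (wstar : W →L[ℝ] ℝ)
    (hwstar : ∀ x ∈ K, wstar (x - Gz0) ≤ 0)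
    (hstat : ∀ z : Z, (∑ i, l i * DH z i) + estar (DF z) + wstar (DG z) = 0) :
    l = 0 ∧ estar = 0 ∧ wstar = 0 := by
  have key : ∀ (e : E) (ξ : Fin n → ℝ) (w : W),
      0 ≤ (∑ i, l i * ξ i) + estar e + wstar w := by
    intro e ξ w
    obtain ⟨z, v, v', ⟨lam, y, hlam, hy, hv⟩, ⟨lam', y', hlam', hy', hv'⟩, hF, hH, hG⟩ :=
      robinson e ξ w
    have hvle : ∑ i, l i * v i ≤ 0 := by
      have h1 : ∑ i, l i * v i = lam * (∑ i, l i * y i) := by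
        subst hv
        rw [Finset.mul_sum]
        have h2 : ∑ i, l i * (lam • (y - Hz0)) i
            = (∑ i, lam * (l i * y i)) - lam * (∑ i, l i * Hz0 i) := by
          rw [Finset.mul_sum, ← Finset.sum_sub_distrib]
          apply Finset.sum_congr rfl
          intro i _
          simp [Pi.smul_apply, smul_eq_mul]
          ring
        rw [h2, hcompl]; ring
      rw [h1]
      apply mul_nonpos_of_nonneg_of_nonpos hlam.le
      apply Finset.sum_nonpos
      intro i _
      exact mul_nonpos_of_nonneg_of_nonpos (hl i) (hy i)
    have hwle : wstar v' ≤ 0 := by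
      subst hv'
      rw [map_smul]
      exact mul_nonpos_of_nonneg_of_nonpos hlam'.le (hwstar y' hy')
    have hs := hstat z
    have hDH : ∀ i, DH z i = ξ i + v i := by
      intro i
      have := congrFun hH i
      simp only [Pi.sub_apply] at this
      linarith
    have hDG : DG z = w + v' := by
      exact sub_eq_iff_eq_add.mp hG
    have hsum : ∑ i, l i * DH z i = (∑ i, l i * ξ i) + ∑ i, l i * v i := by
      rw [← Finset.sum_add_distrib]
      apply Finset.sum_congr rfl
      intro i _
      rw [hDH i]; ring
    rw [hsum, hF, hDG, map_add] at hs
    linarith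
  have keyeq : ∀ (e : E) (ξ : Fin n → ℝ) (w : W),
      (∑ i, l i * ξ i) + estar e + wstar w = 0 := by
    intro e ξ w
    have h1 := key e ξ w
    have h2 := key (-e) (-ξ) (-w)
    have h3 : ∑ i, l i * (-ξ) i = -∑ i, l i * ξ i := by
      rw [← Finset.sum_neg_distrib]
      apply Finset.sum_congr rfl
      intro i _; simp
    rw [h3, map_neg, map_neg] at h2
    linarith
  refine ⟨?_, ?_, ?_⟩
  · funext i
    have := keyeq 0 (Pi.single i 1) 0
    simp [Finset.sum_eq_single i, Pi.single_apply] at this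
    simpa using this
  · ext e
    have := keyeq e 0 0
    simpa using this
  · ext w
    have := keyeq 0 0 w
    simpa using this
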